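/- The H-orbit of Δ₂ is all of Γ₂: for every (x₁,x₂,x₃) ∈ ℤ³ with x₁² − 2x₂² + x₃² = 2 there exist M ∈ H and δ ∈ Δ₂ with (x₁,x₂,x₃) = Mδ as column vectors. -/

import Mathlib

open Matrix

def Bmat : Matrix (Fin 3) (Fin 3) ℤ := !![3, 4, 0; 2, 3, 0; 0, 0, 1]
def Jmat : Matrix (Fin 3) (Fin 3) ℤ := !![0, 0, 1; 0, 1, 0; 1, 0, 0]

def BGL : GL (Fin 3) ℤ :=
  ⟨Bmat, !![3, -4, 0; -2, 3, 0; 0, 0, 1], by decide, by decide⟩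

def JGL : GL (Fin 3) ℤ := ⟨Jmat, Jmat, by decide, by decide⟩

def H : Subgroup (GL (Fin 3) ℤ) := Subgroup.closure {BGL, JGL}

def Delta2 : Set (Fin 3 → ℤ) :=
  {![2, 1, 0], ![-2, 1, 0], ![1, 0, 1], ![-1, 0, 1], ![-1, 0, -1]}

def Good (x : Fin 3 → ℤ) : Prop :=
  ∃ M ∈ H, ∃ δ ∈ Delta2, x = (M : Matrix (Fin 3) (Fin 3) ℤ).mulVec δ

lemma BGL_mem : BGL ∈ H := Subgroup.subset_closure (Set.mem_insert _ _)
lemma JGL_mem : JGL ∈ H := Subgroup.subset_closure (Set.mem_insert_of_mem _ rfl)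

lemma BGL_val : (BGL : Matrix (Fin 3) (Fin 3) ℤ) = Bmat := rfl
lemma JGL_val : (JGL : Matrix (Fin 3) (Fin 3) ℤ) = Jmat := rfl
lemma BGLinv_val : ((BGL⁻¹ : GL (Fin 3) ℤ) : Matrix (Fin 3) (Fin 3) ℤ)
    = !![3, -4, 0; -2, 3, 0; 0, 0, 1] := rfl

lemma good_delta {δ : Fin 3 → ℤ} (h : δ ∈ Delta2) : Good δ :=
  ⟨1, one_mem _, δ, h, by simp⟩

lemma good_transform {v w : Fin 3 → ℤ} (g : GL (Fin 3) ℤ) (hg : g ∈ H) (hw : Good w)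
    (h : v = (g : Matrix (Fin 3) (Fin 3) ℤ).mulVec w) : Good v := by
  obtain ⟨M, hM, δ, hδ, rfl⟩ := hw
  exact ⟨g * M, mul_mem hg hM, δ, hδ, by rw [h, Units.val_mul, Matrix.mulVec_mulVec]⟩

lemma mem1 : ![(2:ℤ),1,0] ∈ Delta2 := Set.mem_insert _ _
lemma mem2 : ![(-2:ℤ),1,0] ∈ Delta2 := Set.mem_insert_of_mem _ (Set.mem_insert _ _)
lemma mem3 : ![(1:ℤ),0,1] ∈ Delta2 :=
  Set.mem_insert_of_mem _ (Set.mem_insert_of_mem _ (Set.mem_insert _ _))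
lemma mem4 : ![(-1:ℤ),0,1] ∈ Delta2 :=
  Set.mem_insert_of_mem _ (Set.mem_insert_of_mem _ (Set.mem_insert_of_mem _ (Set.mem_insert _ _)))
lemma mem5 : ![(-1:ℤ),0,-1] ∈ Delta2 :=
  Set.mem_insert_of_mem _ (Set.mem_insert_of_mem _ (Set.mem_insert_of_mem _
    (Set.mem_insert_of_mem _ rfl)))

lemma good_swap {a b c : ℤ} (h : Good ![a,b,c]) : Good ![c,b,a] := by
  refine good_transform JGL JGL_mem h ?_
  funext i
  fin_cases i <;> simp [JGL_val, Jmat, Matrix.mulVec, dotProduct, Fin.sum_univ_three]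

lemma natAbs_lt_of_sq_lt {p q : ℤ} (h : p^2 < q^2) : p.natAbs < q.natAbs := by
  have h2 := sq_lt_sq.mp h
  rwa [Int.abs_eq_natAbs, Int.abs_eq_natAbs, Nat.cast_lt] at h2

lemma descent (a b c : ℤ) (heq : a^2 - 2*b^2 + c^2 = 2) (hb : b ≠ 0) (hle : c^2 ≤ a^2)
    (IH : ∀ y : Fin 3 → ℤ, (y 0)^2 - 2*(y 1)^2 + (y 2)^2 = 2 → (y 1).natAbs < b.natAbs →
      Good y) : Good ![a, b, c] := by
  by_cases hsmall : b^2 = 1 ∧ c = 0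
  · obtain ⟨hb1, rfl⟩ := hsmall
    have h4 : (a-2)*(a+2) = 0 := by ring_nf; nlinarith
    have hb' : (b-1)*(b+1) = 0 := by ring_nf; nlinarith
    have ha : a = 2 ∨ a = -2 := by
      rcases mul_eq_zero.mp h4 with h | h
      · left; linarith
      · right; linarith
    have hb'' : b = 1 ∨ b = -1 := by
      rcases mul_eq_zero.mp hb' with h | h
      · left; linarith
      · right; linarith
    rcases ha with rfl | rfl <;> rcases hb'' with rfl | rfl
    · exact good_delta mem1
    · refine good_transform BGL⁻¹ (inv_mem BGL_mem) (good_delta mem1) ?_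
      rw [BGLinv_val]
      funext i
      fin_cases i <;>
        simp [Matrix.mulVec, dotProduct, Fin.sum_univ_three]
    · exact good_delta mem2
    · refine good_transform BGL BGL_mem (good_delta mem2) ?_
      funext i
      fin_cases i <;>
        simp [BGL_val, Bmat, Matrix.mulVec, dotProduct, Fin.sum_univ_three]
  · have hb0 : 0 < b^2 := by positivity
    have hb1 : 1 ≤ b^2 := by linarith [Int.lt_iff_add_one_le.mp hb0]
    have h1 : b^2 < a^2 := by nlinarith
    have h2 : a^2 < 4*b^2 := by
      rcases eq_or_ne c 0 with rfl | hc
      · have hne : b^2 ≠ 1 := fun h => hsmall ⟨h, rfl⟩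
        have h2' : 2 ≤ b^2 := by
          linarith [Int.lt_iff_add_one_le.mp (lt_of_le_of_ne hb1 (Ne.symm hne))]
        nlinarith
      · have hc0 : 0 < c^2 := by positivity
        have hc1 : 1 ≤ c^2 := by linarith [Int.lt_iff_add_one_le.mp hc0]
        nlinarith
    have ha0 : a ≠ 0 := by intro h; rw [h] at h1; nlinarith
    -- descent
    rcases lt_or_gt_of_ne ha0 with haneg | hapos <;> rcases lt_or_gt_of_ne hb with hbneg | hbpos
    · -- a<0, b<0 : same sign; w = B⁻¹ x
      have hab1 : a < b := by nlinarith
      have hab2 : 2*b < a := by nlinarith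
      refine good_transform BGL BGL_mem
        (IH ![3*a-4*b, -2*a+3*b, c] ?_ ?_) ?_
      · simp only [Matrix.cons_val_zero, Matrix.cons_val_one, Matrix.head_cons,
          Matrix.cons_val_two, Matrix.tail_cons]
        linear_combination heq
      · simp only [Matrix.cons_val_one, Matrix.head_cons, Matrix.cons_val_zero]
        exact natAbs_lt_of_sq_lt (by nlinarith)
      · funext i
        fin_cases i <;>
          simp [BGL_val, Bmat, Matrix.mulVec, dotProduct, Fin.sum_univ_three] <;> ring
    · -- a<0, b>0 : opposite sign; w = B x, x = B⁻¹ w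
      have hab1 : a < -b := by nlinarith
      have hab2 : -2*b < a := by nlinarith
      refine good_transform BGL⁻¹ (inv_mem BGL_mem)
        (IH ![3*a+4*b, 2*a+3*b, c] ?_ ?_) ?_
      · simp only [Matrix.cons_val_zero, Matrix.cons_val_one, Matrix.head_cons,
          Matrix.cons_val_two, Matrix.tail_cons]
        linear_combination heq
      · simp only [Matrix.cons_val_one, Matrix.head_cons, Matrix.cons_val_zero]
        exact natAbs_lt_of_sq_lt (by nlinarith)
      · rw [BGLinv_val]
        funext i
        fin_cases i <;>
          simp [Matrix.mulVec, dotProduct, Fin.sum_univ_three] <;> ring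
    · -- a>0, b<0 : opposite sign; w = B x
      have hab1 : -b < a := by nlinarith
      have hab2 : a < -2*b := by nlinarith
      refine good_transform BGL⁻¹ (inv_mem BGL_mem)
        (IH ![3*a+4*b, 2*a+3*b, c] ?_ ?_) ?_
      · simp only [Matrix.cons_val_zero, Matrix.cons_val_one, Matrix.head_cons,
          Matrix.cons_val_two, Matrix.tail_cons]
        linear_combination heq
      · simp only [Matrix.cons_val_one, Matrix.head_cons, Matrix.cons_val_zero]
        exact natAbs_lt_of_sq_lt (by nlinarith)
      · rw [BGLinv_val]
        funext i
        fin_cases i <;>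
          simp [Matrix.mulVec, dotProduct, Fin.sum_univ_three] <;> ring
    · -- a>0, b>0 : same sign; w = B⁻¹ x
      have hab1 : b < a := by nlinarith
      have hab2 : a < 2*b := by nlinarith
      refine good_transform BGL BGL_mem
        (IH ![3*a-4*b, -2*a+3*b, c] ?_ ?_) ?_
      · simp only [Matrix.cons_val_zero, Matrix.cons_val_one, Matrix.head_cons,
          Matrix.cons_val_two, Matrix.tail_cons]
        linear_combination heq
      · simp only [Matrix.cons_val_one, Matrix.head_cons, Matrix.cons_val_zero]
        exact natAbs_lt_of_sq_lt (by nlinarith)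
      · funext i
        fin_cases i <;>
          simp [BGL_val, Bmat, Matrix.mulVec, dotProduct, Fin.sum_univ_three] <;> ring

lemma main_good : ∀ n : ℕ, ∀ a b c : ℤ, a^2 - 2*b^2 + c^2 = 2 → b.natAbs = n →
    Good ![a, b, c] := by
  intro n
  induction n using Nat.strong_induction_on with
  | _ n IHn =>
    intro a b c heq hn
    by_cases hb : b = 0
    · subst hb
      have ha : -1 ≤ a ∧ a ≤ 1 := by constructor <;> nlinarith [sq_nonneg c, sq_nonneg a]
      have hc : -1 ≤ c ∧ c ≤ 1 := by constructor <;> nlinarith [sq_nonneg c, sq_nonneg a]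
      obtain ⟨ha1, ha2⟩ := ha
      obtain ⟨hc1, hc2⟩ := hc
      interval_cases a <;> interval_cases c <;> norm_num at heq
      · exact good_delta mem5
      · exact good_delta mem4
      · exact good_swap (good_delta mem4)
      · exact good_delta mem3
    · have IH : ∀ y : Fin 3 → ℤ, (y 0)^2 - 2*(y 1)^2 + (y 2)^2 = 2 →
          (y 1).natAbs < b.natAbs → Good y := by
        intro y hy hlt
        have hy' : y = ![y 0, y 1, y 2] := by
          funext i; fin_cases i <;> rfl
        rw [hy']
        exact IHn (y 1).natAbs (hn ▸ hlt) _ _ _ hy rfl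
      by_cases hle : c^2 ≤ a^2
      · exact descent a b c heq hb hle IH
      · exact good_swap (descent c b a (by linarith) hb (by linarith) IH)

/-- The `H`-orbit of `Δ₂` is all of `Γ₂`. -/
theorem orbit_delta2 (x : Fin 3 → ℤ) (hx : x 0 ^ 2 - 2 * x 1 ^ 2 + x 2 ^ 2 = 2) :
    ∃ M ∈ H, ∃ δ ∈ Delta2, x = (M : Matrix (Fin 3) (Fin 3) ℤ).mulVec δ := by
  have hx' : x = ![x 0, x 1, x 2] := by funext i; fin_cases i <;> rfl
  rw [hx']
  exact main_good (x 1).natAbs (x 0) (x 1) (x 2) hx rfl
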